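/- Let f : ℝⁿ → ℝⁿ be locally Lipschitz, ρ : ℝⁿ → ℝ continuously differentiable, and φ : [0, T] → ℝⁿ a solution of φ'(t) = f(φ(t)). Suppose ∇ρ(x) · f(x) ≥ −λ₀ ρ(x) holds for all x = φ(t), t ∈ [0, T], for some constant λ₀, and ρ(φ(0)) > 0. Then ρ(φ(T)) ≥ e^{−λ₀ T} ρ(φ(0)) > 0. -/

import Mathlib

theorem stmt_8 (n : ℕ) (f : EuclideanSpace ℝ (Fin n) → EuclideanSpace ℝ (Fin n))
    (ρ : EuclideanSpace ℝ (Fin n) → ℝ) (φ : ℝ → EuclideanSpace ℝ (Fin n))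
    (T lam0 : ℝ) (hT : 0 ≤ T)
    (hf : LocallyLipschitz f) (hρ : ContDiff ℝ 1 ρ)
    (hφ : ∀ t ∈ Set.Icc 0 T, HasDerivAt φ (f (φ t)) t)
    (hineq : ∀ t ∈ Set.Icc 0 T,
      (inner ℝ (gradient ρ (φ t)) (f (φ t)) : ℝ) ≥ -lam0 * ρ (φ t))
    (h0 : ρ (φ 0) > 0) :
    ρ (φ T) ≥ Real.exp (-lam0 * T) * ρ (φ 0) ∧ ρ (φ T) > 0 := by
  -- derivative of ρ ∘ φ
  have hcomp : ∀ t ∈ Set.Icc 0 T,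
      HasDerivAt (fun s => ρ (φ s)) (inner ℝ (gradient ρ (φ t)) (f (φ t)) : ℝ) t := by
    intro t ht
    have hg : HasGradientAt ρ (gradient ρ (φ t)) (φ t) :=
      ((hρ.differentiable one_ne_zero) (φ t)).hasGradientAt
    have := hg.hasFDerivAt.comp_hasDerivAt t (hφ t ht)
    simpa [Function.comp_def] using this
  set u : ℝ → ℝ := fun t => Real.exp (lam0 * t) * ρ (φ t) with hu
  have hud : ∀ t ∈ Set.Icc 0 T,
      HasDerivAt u (lam0 * Real.exp (lam0 * t) * ρ (φ t)
        + Real.exp (lam0 * t) * (inner ℝ (gradient ρ (φ t)) (f (φ t)) : ℝ)) t := by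
    intro t ht
    have he : HasDerivAt (fun s => Real.exp (lam0 * s)) (lam0 * Real.exp (lam0 * t)) t := by
      have := (Real.hasDerivAt_exp (lam0 * t)).comp t
        ((hasDerivAt_id t).const_mul lam0)
      simpa [mul_comm, Function.comp_def] using this
    simpa [hu, mul_comm, Pi.mul_def] using he.mul (hcomp t ht)
  have hmono : MonotoneOn u (Set.Icc 0 T) := by
    apply monotoneOn_of_deriv_nonneg (convex_Icc 0 T)
    · intro t ht
      exact ((hud t ht).continuousAt).continuousWithinAt
    · intro t ht
      rw [interior_Icc] at ht
      exact (hud t (Set.mem_Icc_of_Ioo ht)).differentiableAt.differentiableWithinAt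
    · intro t ht
      rw [interior_Icc] at ht
      have ht' := Set.mem_Icc_of_Ioo ht
      rw [(hud t ht').deriv]
      have h1 := hineq t ht'
      have hexp : 0 < Real.exp (lam0 * t) := Real.exp_pos _
      nlinarith [mul_le_mul_of_nonneg_left h1 hexp.le]
  have hle : u 0 ≤ u T := hmono (Set.left_mem_Icc.2 hT) (Set.right_mem_Icc.2 hT) hT
  simp only [hu, mul_zero, Real.exp_zero, one_mul] at hle
  have hexp : 0 < Real.exp (lam0 * T) := Real.exp_pos _
  have h1 : ρ (φ T) ≥ Real.exp (-lam0 * T) * ρ (φ 0) := by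
    rw [ge_iff_le, neg_mul, Real.exp_neg, inv_mul_le_iff₀ hexp]
    exact hle
  exact ⟨h1, lt_of_lt_of_le (by positivity) h1⟩
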